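/- arXiv:1504.02731 — 4 statements merged into one kernel-verified Lean document; each statement's English description precedes it below -/
import Mathlib

section
/- Let f ∈ L¹(ℝ) ∩ L²(ℝ). Let (σ_n) be a sequence of positive real numbers with σ_n → ∞ and let (h_n) be a sequence of real numbers such that h_n/σ_n → r for some r ∈ ℝ. Then σ_n · E[f(h_n + σ_n Z)] converges to (e^{−r²/2}/√(2π)) · ∫_ℝ f(x) dx as n → ∞. -/
open MeasureTheory Filter

/-- Standard Gaussian density. -/
noncomputable def stdGauss (z : ℝ) : ℝ := Real.exp (-z ^ 2 / 2) / Real.sqrt (2 * Real.pi)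

/-- Gaussian expectation `E[f(h + σ Z)]` for a standard Gaussian `Z`. -/
noncomputable def gexp (f : ℝ → ℝ) (σ h : ℝ) : ℝ := ∫ z, f (h + σ * z) * stdGauss z

lemma stdGauss_cont : Continuous stdGauss := by
  unfold stdGauss
  exact (Real.continuous_exp.comp (by continuity)).div_const _

lemma stdGauss_nonneg (z : ℝ) : 0 ≤ stdGauss z := by
  unfold stdGauss; positivity

lemma stdGauss_le (z : ℝ) : stdGauss z ≤ 1 / Real.sqrt (2 * Real.pi) := by
  unfold stdGauss
  have h2 : (0:ℝ) < Real.sqrt (2 * Real.pi) := Real.sqrt_pos.2 (by positivity)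
  have h1 : Real.exp (-z ^ 2 / 2) ≤ 1 := by
    rw [← Real.exp_zero]
    apply Real.exp_le_exp.2
    nlinarith [sq_nonneg z]
  exact (div_le_div_iff_of_pos_right h2).2 h1

theorem stmt_0 (f : ℝ → ℝ) (hf1 : Integrable f) (hf2 : MemLp f 2 (volume : Measure ℝ))
    (σ : ℕ → ℝ) (hσpos : ∀ n, 0 < σ n) (hσ : Tendsto σ atTop atTop)
    (h : ℕ → ℝ) (r : ℝ) (hr : Tendsto (fun n => h n / σ n) atTop (nhds r)) :
    Tendsto (fun n => σ n * gexp f (σ n) (h n)) atTop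
      (nhds (Real.exp (-r ^ 2 / 2) / Real.sqrt (2 * Real.pi) * ∫ x, f x)) := by
  -- Step 1: change of variables
  have key : ∀ n, σ n * gexp f (σ n) (h n)
      = ∫ x, f x * stdGauss ((x - h n) / σ n) := by
    intro n
    have hσn : σ n ≠ 0 := (hσpos n).ne'
    set F : ℝ → ℝ := fun x => f x * stdGauss ((x - h n) / σ n) with hF
    have h1 : ∀ z : ℝ, f (h n + σ n * z) * stdGauss z = F (h n + σ n * z) := by
      intro z
      simp only [hF]
      congr 2
      field_simp
      ring
    have h2 : (∫ z, F (h n + σ n * z)) = |(σ n)⁻¹| • ∫ y, F (h n + y) :=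
      MeasureTheory.Measure.integral_comp_mul_left (fun y => F (h n + y)) (σ n)
    have h3 : (∫ y, F (h n + y)) = ∫ x, F x :=
      integral_add_left_eq_self F (h n)
    rw [gexp]
    simp only [h1]
    rw [h2, h3, abs_of_pos (inv_pos.2 (hσpos n)), smul_eq_mul, ← mul_assoc,
      mul_inv_cancel₀ hσn, one_mul]
  simp only [key]
  -- Step 2: dominated convergence
  have hlim : (Real.exp (-r ^ 2 / 2) / Real.sqrt (2 * Real.pi)) * ∫ x, f x
      = ∫ x, f x * stdGauss (-r) := by
    rw [integral_mul_const]
    rw [mul_comm]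
    congr 1
    unfold stdGauss
    norm_num
  rw [hlim]
  apply tendsto_integral_of_dominated_convergence
    (fun x => |f x| * (1 / Real.sqrt (2 * Real.pi)))
  · intro n
    exact hf1.aestronglyMeasurable.mul
      ((stdGauss_cont.comp (by continuity)).aestronglyMeasurable)
  · exact (hf1.norm.mul_const _)
  · intro n
    filter_upwards with x
    rw [norm_mul, Real.norm_eq_abs, Real.norm_eq_abs,
      abs_of_nonneg (stdGauss_nonneg _)]
    gcongr
    exact stdGauss_le _
  · filter_upwards with x
    apply Tendsto.const_mul
    apply (stdGauss_cont.continuousAt).tendsto.comp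
    have h1 : Tendsto (fun n => x / σ n) atTop (nhds 0) :=
      Tendsto.div_atTop tendsto_const_nhds hσ
    have : Tendsto (fun n => x / σ n - h n / σ n) atTop (nhds (0 - r)) := h1.sub hr
    rw [zero_sub] at this
    convert this using 2 with n
    rw [sub_div]
end

section
/- Let f : ℝ → ℝ be an even function with ∫_ℝ |f(x)| (x² ∨ 1) dx < ∞. Then for every σ > 0 and every h ∈ ℝ, | σ · E[f(h + σZ)] − (e^{−h²/(2σ²)}/√(2π)) · ∫_ℝ f(x) dx | ≤ (1/(2√(2π) σ²)) · ∫_ℝ x² |f(x)| dx. -/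
open MeasureTheory Filter

-- aux inequality |1-2s| exp(-s) ≤ 1 for s ≥ 0
lemma aux_abs_le (s : ℝ) (hs : 0 ≤ s) : |1 - 2*s| * Real.exp (-s) ≤ 1 := by
  have hexp : Real.exp (-s) ≤ 1 := Real.exp_le_one_iff.mpr (by linarith)
  rcases le_or_gt (1 - 2*s) 0 with h | h
  · rw [abs_of_nonpos h, Real.exp_neg, ← div_eq_mul_inv, div_le_one (Real.exp_pos s)]
    have h2 : (1 + s/2)^2 ≤ Real.exp s := by
      have h3 := Real.add_one_le_exp (s/2)
      have h4 : Real.exp (s/2) ^ 2 = Real.exp s := by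
        rw [← Real.exp_nat_mul]; norm_num; ring_nf
      nlinarith [Real.exp_pos (s/2)]
    nlinarith [sq_nonneg (s - 2)]
  · rw [abs_of_pos h]
    nlinarith [Real.exp_pos (-s)]

lemma lip_phi (a : ℝ) (ha : 0 ≤ a) :
    LipschitzWith 1 (fun u : ℝ => u * Real.exp (-(a * u^2))) := by
  apply lipschitzWith_of_nnnorm_deriv_le
  · intro x
    have h1 : HasDerivAt (fun u : ℝ => -(a * u^2)) (-(a * (2*x))) x := by
      simpa using (((hasDerivAt_pow 2 x).const_mul a).fun_neg)
    exact ((hasDerivAt_id x).mul h1.exp).differentiableAt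
  · intro x
    have h1 : HasDerivAt (fun u : ℝ => -(a * u^2)) (-(a * (2*x))) x := by
      simpa using (((hasDerivAt_pow 2 x).const_mul a).fun_neg)
    have h2 : HasDerivAt (fun u : ℝ => u * Real.exp (-(a * u^2)))
        (1 * Real.exp (-(a*x^2)) + x * (Real.exp (-(a*x^2)) * (-(a*(2*x))))) x :=
      (hasDerivAt_id x).mul h1.exp
    rw [h2.deriv]
    have h3 : 1 * Real.exp (-(a*x^2)) + x * (Real.exp (-(a*x^2)) * (-(a*(2*x))))
        = (1 - 2*(a*x^2)) * Real.exp (-(a*x^2)) := by ring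
    have h4 : ‖(1 - 2*(a*x^2)) * Real.exp (-(a*x^2))‖ ≤ (1:ℝ) := by
      rw [Real.norm_eq_abs, abs_mul, abs_of_pos (Real.exp_pos _)]
      exact aux_abs_le (a*x^2) (by positivity)
    rw [h3]
    exact_mod_cast h4

lemma key0 (a : ℝ) (ha : 0 ≤ a) (h x : ℝ) (hx : 0 ≤ x) :
    |Real.exp (-(a*(h-x)^2)) + Real.exp (-(a*(h+x)^2)) - 2*Real.exp (-(a*h^2))|
      ≤ 2*a*x^2 := by
  set g : ℝ → ℝ := fun t => Real.exp (-(a*(h-t)^2)) + Real.exp (-(a*(h+t)^2)) with hgdef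
  have hg : ∀ t : ℝ, HasDerivAt g
      (2*a*((h-t)*Real.exp (-(a*(h-t)^2)) - (h+t)*Real.exp (-(a*(h+t)^2)))) t := by
    intro t
    have d1 : HasDerivAt (fun t : ℝ => -(a*(h-t)^2)) (-(a*(2*(h-t)*(-1)))) t := by
      have := ((((hasDerivAt_id t).const_sub h).fun_pow 2).const_mul a).fun_neg
      refine this.congr_deriv ?_
      norm_num
    have d2 : HasDerivAt (fun t : ℝ => -(a*(h+t)^2)) (-(a*(2*(h+t)*1))) t := by
      have := ((((hasDerivAt_id t).const_add h).fun_pow 2).const_mul a).fun_neg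
      refine this.congr_deriv ?_
      norm_num
    have := (d1.exp.add d2.exp)
    refine this.congr_deriv ?_
    ring
  have hgdiff : Differentiable ℝ g := fun t => (hg t).differentiableAt
  have hbound : ∀ t : ℝ, 0 ≤ t → |deriv g t| ≤ 4*a*t := by
    intro t ht
    rw [(hg t).deriv]
    have hl := (lip_phi a ha).dist_le_mul (h - t) (h + t)
    rw [Real.dist_eq, Real.dist_eq] at hl
    have h2 : |(h-t) - (h+t)| = 2*t := by
      rw [show (h-t) - (h+t) = -(2*t) by ring, abs_neg, abs_of_nonneg (by linarith)]
    rw [abs_mul, abs_of_nonneg (by positivity : (0:ℝ) ≤ 2*a)]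
    calc 2*a * |(h-t)*Real.exp (-(a*(h-t)^2)) - (h+t)*Real.exp (-(a*(h+t)^2))|
        ≤ 2*a * (2*t) := by
          apply mul_le_mul_of_nonneg_left _ (by positivity)
          simpa [h2] using hl
      _ = 4*a*t := by ring
  have hanti1 : AntitoneOn (fun t => g t - 2*a*t^2) (Set.Ici (0:ℝ)) := by
    apply antitoneOn_of_deriv_nonpos (convex_Ici 0)
    · exact (hgdiff.continuous.sub (continuous_const.mul (continuous_pow 2))).continuousOn
    · intro t _
      exact ((hgdiff t).sub (((differentiable_pow 2).const_mul (2*a)) t)).differentiableWithinAt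
    · intro t ht
      rw [interior_Ici] at ht
      have hd : HasDerivAt (fun t => g t - 2*a*t^2) (deriv g t - 2*a*(2*t)) t := by
        exact (hgdiff t).hasDerivAt.sub (by simpa using ((hasDerivAt_pow 2 t).const_mul (2*a)))
      rw [hd.deriv]
      have := hbound t ht.le
      have h3 := abs_le.mp this
      linarith [h3.2]
  have hanti2 : AntitoneOn (fun t => -g t - 2*a*t^2) (Set.Ici (0:ℝ)) := by
    apply antitoneOn_of_deriv_nonpos (convex_Ici 0)
    · exact ((hgdiff.continuous.neg).sub (continuous_const.mul (continuous_pow 2))).continuousOn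
    · intro t _
      exact (((hgdiff t).neg).sub (((differentiable_pow 2).const_mul (2*a)) t)).differentiableWithinAt
    · intro t ht
      rw [interior_Ici] at ht
      have hd : HasDerivAt (fun t => -g t - 2*a*t^2) (-deriv g t - 2*a*(2*t)) t := by
        exact ((hgdiff t).hasDerivAt.neg).sub (by simpa using ((hasDerivAt_pow 2 t).const_mul (2*a)))
      rw [hd.deriv]
      have h3 := abs_le.mp (hbound t ht.le)
      linarith [h3.1]
  have h0 : (0:ℝ) ∈ Set.Ici (0:ℝ) := Set.self_mem_Ici
  have hxmem : x ∈ Set.Ici (0:ℝ) := hx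
  have e1 := hanti1 h0 hxmem hx
  have e2 := hanti2 h0 hxmem hx
  have hg0 : g 0 = 2*Real.exp (-(a*h^2)) := by
    simp only [hgdef]
    norm_num
    ring
  simp only [hg0] at e1 e2
  have : g x - 2*Real.exp (-(a*h^2)) = Real.exp (-(a*(h-x)^2)) + Real.exp (-(a*(h+x)^2)) - 2*Real.exp (-(a*h^2)) := by
    simp [hgdef]
  rw [← this]
  rw [abs_le]
  constructor <;> [linarith [e2]; linarith [e1]]

lemma key (a : ℝ) (ha : 0 ≤ a) (h x : ℝ) :
    |Real.exp (-(a*(h-x)^2)) + Real.exp (-(a*(h+x)^2)) - 2*Real.exp (-(a*h^2))|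
      ≤ 2*a*x^2 := by
  rcases le_total 0 x with hx | hx
  · exact key0 a ha h x hx
  · have := key0 a ha h (-x) (by linarith)
    have e : h - -x = h + x := by ring
    have e2 : h + -x = h - x := by ring
    rw [e, e2] at this
    calc |Real.exp (-(a*(h-x)^2)) + Real.exp (-(a*(h+x)^2)) - 2*Real.exp (-(a*h^2))|
        = |Real.exp (-(a*(h+x)^2)) + Real.exp (-(a*(h-x)^2)) - 2*Real.exp (-(a*h^2))| := by
          ring_nf
      _ ≤ 2*a*(-x)^2 := this
      _ = 2*a*x^2 := by ring


theorem stmt_1 (f : ℝ → ℝ) (heven : ∀ x, f (-x) = f x)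
    (hint : Integrable (fun x => f x * (x ^ 2 ⊔ 1)))
    (σ : ℝ) (hσ : 0 < σ) (h : ℝ) :
    |σ * gexp f σ h - Real.exp (-h ^ 2 / (2 * σ ^ 2)) / Real.sqrt (2 * Real.pi) * ∫ x, f x|
      ≤ 1 / (2 * Real.sqrt (2 * Real.pi) * σ ^ 2) * ∫ x, x ^ 2 * |f x| := by
  have hπ : (0:ℝ) < 2 * Real.pi := by positivity
  set s2 : ℝ := Real.sqrt (2 * Real.pi) with hs2
  have hs2pos : 0 < s2 := Real.sqrt_pos.mpr hπ
  have hs2one : 1 ≤ s2 := by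
    rw [hs2, show (1:ℝ) = Real.sqrt 1 by simp]
    exact Real.sqrt_le_sqrt (by nlinarith [Real.pi_gt_three])
  set G : ℝ → ℝ := fun u => Real.exp (-(u ^ 2 / (2 * σ ^ 2))) / s2 with hGdef
  have hGcont : Continuous G := by
    apply Continuous.div_const
    exact Real.continuous_exp.comp (by fun_prop)
  have hGbound : ∀ u, |G u| ≤ 1 := by
    intro u
    have h1 : 0 < G u := by positivity
    rw [abs_of_pos h1, hGdef]
    have h2 : Real.exp (-(u ^ 2 / (2 * σ ^ 2))) ≤ 1 := by
      apply Real.exp_le_one_iff.mpr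
      have : (0:ℝ) ≤ u ^ 2 / (2 * σ ^ 2) := by positivity
      linarith
    calc Real.exp (-(u ^ 2 / (2 * σ ^ 2))) / s2 ≤ 1 / s2 :=
          div_le_div_of_nonneg_right h2 hs2pos.le
      _ ≤ 1 := by rw [div_le_one hs2pos]; exact hs2one
  -- measurability / integrability
  have hsup_pos : ∀ x : ℝ, (0:ℝ) < x ^ 2 ⊔ 1 := fun x => lt_of_lt_of_le one_pos le_sup_right
  have hfm : AEStronglyMeasurable f (volume : Measure ℝ) := by
    have h1 := hint.aestronglyMeasurable
    have h2 : Continuous fun x : ℝ => (x ^ 2 ⊔ 1)⁻¹ := by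
      apply Continuous.inv₀
      · exact (continuous_pow 2).sup continuous_const
      · exact fun x => (hsup_pos x).ne'
    have h3 : f = fun x => (f x * (x ^ 2 ⊔ 1)) * (x ^ 2 ⊔ 1)⁻¹ := by
      funext x
      rw [mul_assoc, mul_inv_cancel₀ (hsup_pos x).ne', mul_one]
    rw [h3]
    exact h1.mul h2.aestronglyMeasurable
  have hfabs : ∀ x : ℝ, |f x| ≤ |f x * (x ^ 2 ⊔ 1)| := by
    intro x
    rw [abs_mul, abs_of_pos (hsup_pos x)]
    nlinarith [abs_nonneg (f x), (le_sup_right : (1:ℝ) ≤ x ^ 2 ⊔ 1)]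
  have hf_int : Integrable f := by
    refine hint.abs.mono' hfm (Eventually.of_forall fun x => ?_)
    simpa [Real.norm_eq_abs] using hfabs x
  have hq_int : Integrable (fun x : ℝ => x ^ 2 * |f x|) := by
    have habs_m : AEStronglyMeasurable (fun x => |f x|) (volume : Measure ℝ) := by
      simpa [Real.norm_eq_abs] using hfm.norm
    refine hint.abs.mono' ((measurable_id.pow_const 2).aestronglyMeasurable.mul habs_m)
      (Eventually.of_forall fun x => ?_)
    rw [Real.norm_eq_abs, abs_of_nonneg (by positivity), abs_mul, abs_of_pos (hsup_pos x)]
    exact mul_le_mul_of_nonneg_right (le_sup_left : x ^ 2 ≤ x ^ 2 ⊔ 1) (abs_nonneg _)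
      |>.trans_eq (mul_comm _ _)
  have hfG_int : ∀ c : ℝ, Integrable (fun x => f x * G (x - c)) := by
    intro c
    refine hf_int.abs.mono'
      (hfm.mul ((hGcont.comp (by fun_prop : Continuous fun x : ℝ => x - c)).aestronglyMeasurable))
      (Eventually.of_forall fun x => ?_)
    rw [Real.norm_eq_abs, abs_mul]
    calc |f x| * |G (x - c)| ≤ |f x| * 1 := mul_le_mul_of_nonneg_left (hGbound _) (abs_nonneg _)
      _ = |f x| := mul_one _
  have hfG2_int : Integrable (fun x => f x * G (x + h)) := by
    have := hfG_int (-h)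
    simpa [sub_neg_eq_add] using this
  -- change of variables
  have hB : σ * gexp f σ h = ∫ x, f x * G (x - h) := by
    have h1 : (fun z : ℝ => f (h + σ * z) * stdGauss z)
        = fun z => (fun y : ℝ => f (h + y) * G (h + y - h)) (σ * z) := by
      funext z
      simp only [stdGauss, hGdef, add_sub_cancel_left]
      congr 2
      field_simp
    rw [gexp, h1, Measure.integral_comp_mul_left (fun y : ℝ => f (h + y) * G (h + y - h)) σ]
    have h2 : (∫ y : ℝ, f (h + y) * G (h + y - h)) = ∫ x, f x * G (x - h) :=
      integral_add_left_eq_self (fun x : ℝ => f x * G (x - h)) h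
    rw [h2, smul_eq_mul, abs_inv, abs_of_pos hσ]
    field_simp
  -- evenness
  have hC : (∫ x, f x * G (x - h)) = ∫ x, f x * G (x + h) := by
    calc (∫ x, f x * G (x - h)) = ∫ x, f (-x) * G (-x - h) :=
          (integral_neg_eq_self (fun x => f x * G (x - h)) (volume : Measure ℝ)).symm
      _ = ∫ x, f x * G (x + h) := by
          congr 1
          funext x
          rw [heven x]
          congr 1
          simp only [hGdef]
          ring_nf
  -- key pointwise bound
  have key2 : ∀ x : ℝ, |G (x - h) + G (x + h) - 2 * G h| ≤ x ^ 2 / (σ ^ 2 * s2) := by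
    intro x
    have hk := key ((2 * σ ^ 2)⁻¹) (by positivity) h x
    have e1 : G (x - h) = Real.exp (-((2 * σ ^ 2)⁻¹ * (h - x) ^ 2)) / s2 := by
      simp only [hGdef]; ring_nf
    have e2 : G (x + h) = Real.exp (-((2 * σ ^ 2)⁻¹ * (h + x) ^ 2)) / s2 := by
      simp only [hGdef]; ring_nf
    have e3 : G h = Real.exp (-((2 * σ ^ 2)⁻¹ * h ^ 2)) / s2 := by
      simp only [hGdef]; ring_nf
    rw [e1, e2, e3]
    have hcomb : Real.exp (-((2 * σ ^ 2)⁻¹ * (h - x) ^ 2)) / s2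
        + Real.exp (-((2 * σ ^ 2)⁻¹ * (h + x) ^ 2)) / s2
        - 2 * (Real.exp (-((2 * σ ^ 2)⁻¹ * h ^ 2)) / s2)
        = (Real.exp (-((2 * σ ^ 2)⁻¹ * (h - x) ^ 2)) + Real.exp (-((2 * σ ^ 2)⁻¹ * (h + x) ^ 2))
            - 2 * Real.exp (-((2 * σ ^ 2)⁻¹ * h ^ 2))) / s2 := by ring
    rw [hcomb, abs_div, abs_of_pos hs2pos, div_le_div_iff₀ hs2pos (by positivity)]
    calc |Real.exp (-((2 * σ ^ 2)⁻¹ * (h - x) ^ 2)) + Real.exp (-((2 * σ ^ 2)⁻¹ * (h + x) ^ 2))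
          - 2 * Real.exp (-((2 * σ ^ 2)⁻¹ * h ^ 2))| * (σ ^ 2 * s2)
        ≤ (2 * (2 * σ ^ 2)⁻¹ * x ^ 2) * (σ ^ 2 * s2) :=
          mul_le_mul_of_nonneg_right hk (by positivity)
      _ = x ^ 2 * s2 := by field_simp
  -- combine integrals
  have hsum_eq : (∫ x, f x * (G (x - h) + G (x + h) - 2 * G h))
      = (∫ x, f x * G (x - h)) + (∫ x, f x * G (x + h)) - (2 * G h) * (∫ x, f x) := by
    have e : (fun x => f x * (G (x - h) + G (x + h) - 2 * G h))
        = fun x => (f x * G (x - h) + f x * G (x + h)) - (2 * G h) * f x := by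
      funext x; ring
    have iadd : Integrable (fun x => f x * G (x - h) + f x * G (x + h)) :=
      (hfG_int h).add hfG2_int
    have imul : Integrable (fun x => (2 * G h) * f x) := hf_int.const_mul (2 * G h)
    rw [e, integral_sub iadd imul, integral_add (hfG_int h) hfG2_int, integral_const_mul]
  have hbig : |(∫ x, f x * G (x - h)) + (∫ x, f x * G (x + h)) - (2 * G h) * (∫ x, f x)|
      ≤ (1 / (σ ^ 2 * s2)) * ∫ x, x ^ 2 * |f x| := by
    rw [← hsum_eq]
    have hInt : Integrable (fun x : ℝ => (1 / (σ ^ 2 * s2)) * (x ^ 2 * |f x|)) :=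
      hq_int.const_mul _
    calc |∫ x, f x * (G (x - h) + G (x + h) - 2 * G h)|
        ≤ ∫ x, (1 / (σ ^ 2 * s2)) * (x ^ 2 * |f x|) := by
          rw [← Real.norm_eq_abs]
          apply norm_integral_le_of_norm_le hInt
          filter_upwards with x
          rw [Real.norm_eq_abs, abs_mul]
          calc |f x| * |G (x - h) + G (x + h) - 2 * G h|
              ≤ |f x| * (x ^ 2 / (σ ^ 2 * s2)) :=
                mul_le_mul_of_nonneg_left (key2 x) (abs_nonneg _)
            _ = (1 / (σ ^ 2 * s2)) * (x ^ 2 * |f x|) := by ring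
      _ = (1 / (σ ^ 2 * s2)) * ∫ x, x ^ 2 * |f x| := integral_const_mul _ _
  -- finish
  have hGh : Real.exp (-h ^ 2 / (2 * σ ^ 2)) / s2 = G h := by
    simp only [hGdef]
    ring_nf
  rw [hB, hGh]
  have hfinal : (∫ x, f x * G (x - h)) + (∫ x, f x * G (x + h)) - (2 * G h) * (∫ x, f x)
      = 2 * ((∫ x, f x * G (x - h)) - G h * (∫ x, f x)) := by
    rw [← hC]; ring
  rw [hfinal] at hbig
  rw [abs_mul, abs_of_pos (by norm_num : (0:ℝ) < 2)] at hbig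
  have hscale : (1 / (σ ^ 2 * s2)) * (∫ x, x ^ 2 * |f x|)
      = 2 * (1 / (2 * s2 * σ ^ 2) * ∫ x, x ^ 2 * |f x|) := by
    field_simp
  linarith [hbig, hscale.le, hscale.ge]
end

section
/- Let f ∈ L¹(ℝ²) ∩ L²(ℝ²). For each t ∈ [0,∞) let λ₁(t), λ₂(t) > 0, let v₁(t), v₂(t) be an orthonormal basis of ℝ², and let m(t) ∈ ℝ². Let ν > 0 and let w₁, w₂ be a fixed orthonormal basis of ℝ². Assume that as t → ∞: v₁(t) → w₁ and v₂(t) → w₂, λ₁(t) → ν, λ₂(t) → ∞, ⟨m(t), v₁(t)⟩ → 0, and ⟨m(t), v₂(t)⟩²/λ₂(t) → L for some L ≥ 0. Then λ₂(t)^{1/2} · E[ f( m(t) + λ₁(t)^{1/2} Z₁ v₁(t) + λ₂(t)^{1/2} Z₂ v₂(t) ) ] converges, as t → ∞, to (e^{−L/2}/√(2π)) · E[ ⟨f⟩(ν^{1/2} Z) ], where ⟨f⟩(x) = ∫_ℝ f(x w₁ + y w₂) dy is the bracket of f with respect to {w₁, w₂}. -/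
open MeasureTheory Filter

/-- Euclidean inner product on `ℝ × ℝ`. -/
def dot (p q : ℝ × ℝ) : ℝ := p.1 * q.1 + p.2 * q.2

lemma stdGauss_le_one (z : ℝ) : stdGauss z ≤ 1 := by
  unfold stdGauss
  rw [div_le_one (by positivity)]
  calc Real.exp (-z^2/2) ≤ 1 := by
        rw [Real.exp_le_one_iff]; nlinarith [sq_nonneg z]
    _ ≤ Real.sqrt (2 * Real.pi) := by
        rw [show (1:ℝ) = Real.sqrt 1 by simp]
        apply Real.sqrt_le_sqrt; nlinarith [Real.pi_gt_three]

lemma stdGauss_abs_le_one (z : ℝ) : |stdGauss z| ≤ 1 := by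
  rw [abs_of_nonneg (stdGauss_nonneg z)]; exact stdGauss_le_one z


lemma recon (v1 v2 : ℝ × ℝ) (h1 : dot v1 v1 = 1) (h2 : dot v2 v2 = 1) (h3 : dot v1 v2 = 0)
    (p : ℝ × ℝ) : (dot p v1) • v1 + (dot p v2) • v2 = p := by
  simp only [dot] at *
  obtain ⟨a, b⟩ := v1
  obtain ⟨c, d⟩ := v2
  simp only at *
  have hca : c^2 = b^2 := by
    linear_combination (-(c^2))*(by linarith : a^2+b^2 = (1:ℝ)) + b^2*(by linarith : c^2+d^2 = (1:ℝ)) + (a*c - b*d)*h3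
  have hda : d^2 = a^2 := by
    linear_combination (-(d^2))*(by linarith : a^2+b^2 = (1:ℝ)) + a^2*(by linarith : c^2+d^2 = (1:ℝ)) + (b*d - a*c)*h3
  have hcross : a*b + c*d = 0 := by
    linear_combination -(a*b*(by linarith : c^2+d^2 = (1:ℝ))) - c*d*(by linarith : a^2+b^2 = (1:ℝ)) + (a*d+b*c)*h3
  obtain ⟨p1, p2⟩ := p
  rw [Prod.smul_mk, Prod.smul_mk, Prod.mk_add_mk, Prod.mk.injEq]
  simp only [smul_eq_mul]
  constructor
  · linear_combination p1*(by linarith : a^2+c^2 = (1:ℝ)) + p2*hcross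
  · linear_combination p2*(by linarith : b^2+d^2 = (1:ℝ)) + p1*hcross


noncomputable def T (v1 v2 : ℝ × ℝ) : (ℝ × ℝ) →ₗ[ℝ] (ℝ × ℝ) where
  toFun q := q.1 • v1 + q.2 • v2
  map_add' := by intro x y; simp only [Prod.fst_add, Prod.snd_add, add_smul]; abel
  map_smul' := by
    intro r x
    simp only [Prod.smul_fst, Prod.smul_snd, smul_eq_mul, RingHom.id_apply, smul_add,
      mul_smul]

lemma detT (v1 v2 : ℝ × ℝ) : LinearMap.det (T v1 v2) = v1.1 * v2.2 - v2.1 * v1.2 := by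
  rw [← LinearMap.det_toMatrix (Module.Basis.finTwoProd ℝ), Matrix.det_fin_two]
  simp [LinearMap.toMatrix_apply, T, Module.Basis.finTwoProd]

lemma rotMP (v1 v2 : ℝ × ℝ) (h1 : dot v1 v1 = 1) (h2 : dot v2 v2 = 1) (h3 : dot v1 v2 = 0) :
    MeasurePreserving (T v1 v2) volume volume ∧ MeasurableEmbedding (T v1 v2) := by
  simp only [dot] at h1 h2 h3
  have hdet2 : (LinearMap.det (T v1 v2))^2 = 1 := by
    rw [detT]; nlinarith [sq_nonneg (v1.1*v2.2 - v2.1*v1.2)]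
  have hdet : |LinearMap.det (T v1 v2)| = 1 := by
    rw [← Real.sqrt_sq_eq_abs, hdet2, Real.sqrt_one]
  have hdet0 : LinearMap.det (T v1 v2) ≠ 0 := by
    intro h; rw [h] at hdet; simp at hdet
  have hcont : Continuous (T v1 v2) := by
    have : (T v1 v2 : (ℝ×ℝ) → (ℝ×ℝ)) = fun q => q.1 • v1 + q.2 • v2 := rfl
    rw [this]; fun_prop
  have hker : LinearMap.ker (T v1 v2) = ⊥ :=
    LinearMap.ker_eq_bot.mpr (LinearMap.equivOfDetNeZero _ hdet0).injective
  have hemb : MeasurableEmbedding (T v1 v2) :=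
    (LinearMap.isClosedEmbedding_of_injective hker).measurableEmbedding
  refine ⟨⟨hcont.measurable, ?_⟩, hemb⟩
  rw [Measure.map_linearMap_addHaar_eq_smul_addHaar volume hdet0]
  rw [abs_inv, hdet]
  simp

lemma dotT1 (v1 v2 : ℝ × ℝ) (h1 : dot v1 v1 = 1) (h3 : dot v1 v2 = 0) (q : ℝ × ℝ) :
    dot (q.1 • v1 + q.2 • v2) v1 = q.1 := by
  simp only [dot] at *
  simp only [Prod.fst_add, Prod.snd_add, Prod.smul_fst, Prod.smul_snd, smul_eq_mul]
  linear_combination q.1 * h1 + q.2 * h3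

lemma dotT2 (v1 v2 : ℝ × ℝ) (h2 : dot v2 v2 = 1) (h3 : dot v1 v2 = 0) (q : ℝ × ℝ) :
    dot (q.1 • v1 + q.2 • v2) v2 = q.2 := by
  simp only [dot] at *
  simp only [Prod.fst_add, Prod.snd_add, Prod.smul_fst, Prod.smul_snd, smul_eq_mul]
  linear_combination q.2 * h2 + q.1 * h3

lemma master (f : ℝ × ℝ → ℝ) (hf : Integrable f (volume : Measure (ℝ × ℝ)))
    (v1 v2 : ℝ × ℝ) (h1 : dot v1 v1 = 1) (h2 : dot v2 v2 = 1) (h3 : dot v1 v2 = 0)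
    (φ ψ : ℝ → ℝ) (hφ : Measurable φ) (hψ : Measurable ψ)
    (Cφ Cψ : ℝ) (hCφ : ∀ x, |φ x| ≤ Cφ) (hCψ : ∀ x, |ψ x| ≤ Cψ) :
    (∫ u : ℝ, (∫ y : ℝ, f (u • v1 + y • v2) * ψ y) * φ u)
      = ∫ p : ℝ × ℝ, f p * φ (dot p v1) * ψ (dot p v2) := by
  obtain ⟨hmp, hemb⟩ := rotMP v1 v2 h1 h2 h3
  -- integrability of F on the product
  have hfT : Integrable (fun q : ℝ × ℝ => f (T v1 v2 q)) volume :=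
    (hmp.integrable_comp_emb hemb).mpr hf
  have hF : Integrable (fun q : ℝ × ℝ => f (T v1 v2 q) * (φ q.1 * ψ q.2)) volume := by
    have hb : ∀ q : ℝ × ℝ, ‖φ q.1 * ψ q.2‖ ≤ Cφ * Cψ := by
      intro q
      rw [norm_mul, Real.norm_eq_abs, Real.norm_eq_abs]
      have h0 : (0:ℝ) ≤ Cψ := le_trans (abs_nonneg _) (hCψ 0)
      exact mul_le_mul (hCφ _) (hCψ _) (abs_nonneg _) (le_trans (abs_nonneg _) (hCφ 0))
    have := hfT.bdd_mul
      ((hφ.comp measurable_fst).mul (hψ.comp measurable_snd)).aestronglyMeasurable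
      (Filter.Eventually.of_forall hb)
    simpa [mul_comm] using this
  -- step 1: rotate
  have step1 : (∫ p : ℝ × ℝ, f p * φ (dot p v1) * ψ (dot p v2))
      = ∫ q : ℝ × ℝ, f (T v1 v2 q) * (φ q.1 * ψ q.2) := by
    rw [← hmp.integral_comp hemb (fun p => f p * φ (dot p v1) * ψ (dot p v2))]
    congr 1
    ext q
    have e1 : dot (T v1 v2 q) v1 = q.1 := dotT1 v1 v2 h1 h3 q
    have e2 : dot (T v1 v2 q) v2 = q.2 := dotT2 v1 v2 h2 h3 q
    rw [e1, e2]; ring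
  -- step 2: Fubini
  have step2 : (∫ q : ℝ × ℝ, f (T v1 v2 q) * (φ q.1 * ψ q.2))
      = ∫ u : ℝ, ∫ y : ℝ, f (u • v1 + y • v2) * (φ u * ψ y) := by
    rw [Measure.volume_eq_prod] at hF ⊢
    exact (integral_integral (f := fun u y => f (u • v1 + y • v2) * (φ u * ψ y)) hF).symm
  rw [step1, step2]
  congr 1
  ext u
  rw [← integral_mul_const]
  congr 1
  ext y
  ring

-- 1D substitution: ∫ K = s * ∫ z, K (b + s z)
lemma sub1 (K : ℝ → ℝ) (s b : ℝ) (hs : 0 < s) :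
    (∫ y : ℝ, K y) = s * ∫ z : ℝ, K (b + s * z) := by
  have h1 : (∫ z : ℝ, K (b + s * z)) = |s⁻¹| • ∫ x : ℝ, K (b + x) := by
    exact MeasureTheory.Measure.integral_comp_mul_left (fun x => K (b + x)) s
  have h2 : (∫ x : ℝ, K (b + x)) = ∫ y : ℝ, K y := integral_add_left_eq_self K b
  rw [h1, h2, abs_of_pos (inv_pos.mpr hs), smul_eq_mul]
  field_simp

lemma LHS_eq (f : ℝ × ℝ → ℝ) (hf : Integrable f (volume : Measure (ℝ × ℝ)))
    (v1 v2 : ℝ × ℝ) (h1 : dot v1 v1 = 1) (h2 : dot v2 v2 = 1) (h3 : dot v1 v2 = 0)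
    (s1 s2 : ℝ) (hs1 : 0 < s1) (hs2 : 0 < s2) (a b : ℝ) :
    s2 * ∫ z1 : ℝ, (∫ z2 : ℝ, f ((a + s1*z1) • v1 + (b + s2*z2) • v2) * stdGauss z2) * stdGauss z1
      = ∫ p : ℝ × ℝ, f p * (stdGauss ((dot p v1 - a)/s1) / s1) * stdGauss ((dot p v2 - b)/s2) := by
  have inner : ∀ c : ℝ, (∫ z2 : ℝ, f (c • v1 + (b + s2*z2) • v2) * stdGauss z2)
      = (1/s2) * ∫ y : ℝ, f (c • v1 + y • v2) * stdGauss ((y - b)/s2) := by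
    intro c
    have key := sub1 (fun y => f (c • v1 + y • v2) * stdGauss ((y - b)/s2)) s2 b hs2
    calc (∫ z2 : ℝ, f (c • v1 + (b + s2*z2) • v2) * stdGauss z2)
        = ∫ z2 : ℝ, f (c • v1 + (b + s2*z2) • v2) * stdGauss ((b + s2*z2 - b)/s2) := by
          apply integral_congr_ae
          filter_upwards with z
          rw [show (b + s2*z - b)/s2 = z by field_simp; ring]
      _ = (1/s2) * ∫ y : ℝ, f (c • v1 + y • v2) * stdGauss ((y - b)/s2) := by
          rw [key, one_div, inv_mul_cancel_left₀ hs2.ne']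
  calc s2 * ∫ z1 : ℝ, (∫ z2 : ℝ, f ((a + s1*z1) • v1 + (b + s2*z2) • v2) * stdGauss z2) * stdGauss z1
      = s2 * ∫ z1 : ℝ, (1/s2) * ((∫ y : ℝ, f ((a + s1*z1) • v1 + y • v2) * stdGauss ((y - b)/s2)) * stdGauss z1) := by
        congr 1
        apply integral_congr_ae
        filter_upwards with z1
        rw [inner (a + s1*z1), mul_assoc]
    _ = ∫ z1 : ℝ, (∫ y : ℝ, f ((a + s1*z1) • v1 + y • v2) * stdGauss ((y - b)/s2)) * stdGauss z1 := by
        rw [integral_const_mul, ← mul_assoc, mul_one_div, div_self hs2.ne', one_mul]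
    _ = ∫ u : ℝ, (∫ y : ℝ, f (u • v1 + y • v2) * stdGauss ((y - b)/s2)) * (stdGauss ((u - a)/s1)/s1) := by
        have key2 := sub1 (fun u => (∫ y : ℝ, f (u • v1 + y • v2) * stdGauss ((y - b)/s2)) * (stdGauss ((u - a)/s1)/s1)) s1 a hs1
        rw [key2]
        rw [← integral_const_mul]
        apply integral_congr_ae
        filter_upwards with z
        rw [show (a + s1*z - a)/s1 = z by field_simp; ring]
        field_simp
    _ = ∫ p : ℝ × ℝ, f p * (stdGauss ((dot p v1 - a)/s1) / s1) * stdGauss ((dot p v2 - b)/s2) := by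
        have hφm : Measurable fun u : ℝ => stdGauss ((u - a)/s1)/s1 :=
          ((stdGauss_cont.comp (by fun_prop)).div_const s1).measurable
        have hψm : Measurable fun y : ℝ => stdGauss ((y - b)/s2) :=
          (stdGauss_cont.comp (by fun_prop)).measurable
        have hbφ : ∀ x : ℝ, |stdGauss ((x - a)/s1)/s1| ≤ 1/s1 := by
          intro x
          rw [abs_div, abs_of_pos hs1]
          gcongr
          exact stdGauss_abs_le_one _
        have := master f hf v1 v2 h1 h2 h3
          (fun u => stdGauss ((u - a)/s1)/s1) (fun y => stdGauss ((y - b)/s2))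
          hφm hψm (1/s1) 1 hbφ (fun x => stdGauss_abs_le_one _)
        simpa only using this

lemma RHS_eq (f : ℝ × ℝ → ℝ) (hf : Integrable f (volume : Measure (ℝ × ℝ)))
    (w1 w2 : ℝ × ℝ) (h1 : dot w1 w1 = 1) (h2 : dot w2 w2 = 1) (h3 : dot w1 w2 = 0)
    (sν : ℝ) (hsν : 0 < sν) (C : ℝ) :
    C * ∫ z : ℝ, (∫ y : ℝ, f ((sν*z) • w1 + y • w2)) * stdGauss z
      = ∫ p : ℝ × ℝ, f p * (stdGauss (dot p w1 / sν) / sν) * C := by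
  calc C * ∫ z : ℝ, (∫ y : ℝ, f ((sν*z) • w1 + y • w2)) * stdGauss z
      = C * ((1/sν) * ∫ u : ℝ, (∫ y : ℝ, f (u • w1 + y • w2)) * stdGauss (u/sν)) := by
        congr 1
        have key := sub1 (fun u => (∫ y : ℝ, f (u • w1 + y • w2)) * stdGauss (u/sν)) sν 0 hsν
        rw [key, one_div, inv_mul_cancel_left₀ hsν.ne']
        apply integral_congr_ae
        filter_upwards with z
        rw [show (0:ℝ) + sν*z = sν*z by ring, show sν*z/sν = z by field_simp]
    _ = ∫ u : ℝ, (∫ y : ℝ, f (u • w1 + y • w2) * C) * (stdGauss (u/sν)/sν) := by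
        rw [← integral_const_mul (1/sν), ← integral_const_mul C]
        apply integral_congr_ae
        filter_upwards with u
        rw [integral_mul_const]
        ring
    _ = ∫ p : ℝ × ℝ, f p * (stdGauss (dot p w1 / sν) / sν) * C := by
        have hφm : Measurable fun u : ℝ => stdGauss (u/sν)/sν :=
          ((stdGauss_cont.comp (by fun_prop)).div_const sν).measurable
        have hbφ : ∀ x : ℝ, |stdGauss (x/sν)/sν| ≤ 1/sν := by
          intro x
          rw [abs_div, abs_of_pos hsν]
          gcongr
          exact stdGauss_abs_le_one _
        have := master f hf w1 w2 h1 h2 h3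
          (fun u => stdGauss (u/sν)/sν) (fun _ => C)
          hφm measurable_const (1/sν) |C| hbφ (fun x => le_refl _)
        simpa only using this

theorem stmt_9 (f : ℝ × ℝ → ℝ)
    (hf1 : Integrable f (volume : Measure (ℝ × ℝ)))
    (hf2 : MemLp f 2 (volume : Measure (ℝ × ℝ)))
    (lam1 lam2 : ℝ → ℝ) (v1 v2 : ℝ → ℝ × ℝ) (m : ℝ → ℝ × ℝ)
    (hlam1pos : ∀ t, 0 < lam1 t) (hlam2pos : ∀ t, 0 < lam2 t)
    (horth : ∀ t, dot (v1 t) (v1 t) = 1 ∧ dot (v2 t) (v2 t) = 1 ∧ dot (v1 t) (v2 t) = 0)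
    (ν : ℝ) (hν : 0 < ν) (w1 w2 : ℝ × ℝ)
    (hworth : dot w1 w1 = 1 ∧ dot w2 w2 = 1 ∧ dot w1 w2 = 0)
    (hv1 : Tendsto v1 atTop (nhds w1)) (hv2 : Tendsto v2 atTop (nhds w2))
    (hl1 : Tendsto lam1 atTop (nhds ν)) (hl2 : Tendsto lam2 atTop atTop)
    (hm1 : Tendsto (fun t => dot (m t) (v1 t)) atTop (nhds 0))
    (L : ℝ) (hL : 0 ≤ L)
    (hm2 : Tendsto (fun t => dot (m t) (v2 t) ^ 2 / lam2 t) atTop (nhds L)) :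
    Tendsto
      (fun t => Real.sqrt (lam2 t) *
        ∫ (z1 : ℝ), (∫ (z2 : ℝ),
            f (m t + (Real.sqrt (lam1 t) * z1) • v1 t + (Real.sqrt (lam2 t) * z2) • v2 t) *
              stdGauss z2) * stdGauss z1)
      atTop
      (nhds (Real.exp (-L / 2) / Real.sqrt (2 * Real.pi) *
        ∫ (z : ℝ), (∫ (y : ℝ), f ((Real.sqrt ν * z) • w1 + y • w2)) * stdGauss z)) := by
  obtain ⟨hw1, hw2, hw3⟩ := hworth
  set C : ℝ := Real.exp (-L / 2) / Real.sqrt (2 * Real.pi) with hCdef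
  set Flim : ℝ × ℝ → ℝ :=
    fun p => f p * (stdGauss (dot p w1 / Real.sqrt ν) / Real.sqrt ν) * C with hFlimdef
  set F : ℝ → ℝ × ℝ → ℝ := fun t p =>
    f p * (stdGauss ((dot p (v1 t) - dot (m t) (v1 t)) / Real.sqrt (lam1 t)) /
        Real.sqrt (lam1 t)) *
      stdGauss ((dot p (v2 t) - dot (m t) (v2 t)) / Real.sqrt (lam2 t)) with hFdef
  have hLHS : ∀ t, Real.sqrt (lam2 t) *
      ∫ (z1 : ℝ), (∫ (z2 : ℝ),
          f (m t + (Real.sqrt (lam1 t) * z1) • v1 t + (Real.sqrt (lam2 t) * z2) • v2 t) *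
            stdGauss z2) * stdGauss z1 = ∫ p : ℝ × ℝ, F t p := by
    intro t
    obtain ⟨h1, h2, h3⟩ := horth t
    have hs1 : 0 < Real.sqrt (lam1 t) := Real.sqrt_pos.mpr (hlam1pos t)
    have hs2 : 0 < Real.sqrt (lam2 t) := Real.sqrt_pos.mpr (hlam2pos t)
    have harg : ∀ z1 z2 : ℝ,
        m t + (Real.sqrt (lam1 t) * z1) • v1 t + (Real.sqrt (lam2 t) * z2) • v2 t
        = (dot (m t) (v1 t) + Real.sqrt (lam1 t) * z1) • v1 t +
          (dot (m t) (v2 t) + Real.sqrt (lam2 t) * z2) • v2 t := by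
      intro z1 z2
      conv_lhs => rw [← recon (v1 t) (v2 t) h1 h2 h3 (m t)]
      module
    simp only [harg]
    exact LHS_eq f hf1 (v1 t) (v2 t) h1 h2 h3 _ _ hs1 hs2 (dot (m t) (v1 t)) (dot (m t) (v2 t))
  have hRHS : C * ∫ z : ℝ, (∫ y : ℝ, f ((Real.sqrt ν * z) • w1 + y • w2)) * stdGauss z
      = ∫ p : ℝ × ℝ, Flim p :=
    RHS_eq f hf1 w1 w2 hw1 hw2 hw3 _ (Real.sqrt_pos.mpr hν) C
  have hsv2pos : 0 < Real.sqrt (ν/2) := Real.sqrt_pos.mpr (by linarith)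
  have key : Tendsto (fun t => ∫ p : ℝ × ℝ, F t p) atTop (nhds (∫ p : ℝ × ℝ, Flim p)) := by
    apply tendsto_integral_filter_of_dominated_convergence
      (bound := fun p => |f p| * (1 / Real.sqrt (ν/2)))
    · -- measurability
      filter_upwards with t
      have c1 : Continuous fun p : ℝ × ℝ =>
          stdGauss ((dot p (v1 t) - dot (m t) (v1 t)) / Real.sqrt (lam1 t)) /
            Real.sqrt (lam1 t) := by
        apply Continuous.div_const
        apply stdGauss_cont.comp
        apply Continuous.div_const
        apply Continuous.sub _ continuous_const
        unfold dot; fun_prop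
      have c2 : Continuous fun p : ℝ × ℝ =>
          stdGauss ((dot p (v2 t) - dot (m t) (v2 t)) / Real.sqrt (lam2 t)) := by
        apply stdGauss_cont.comp
        apply Continuous.div_const
        apply Continuous.sub _ continuous_const
        unfold dot; fun_prop
      exact (hf1.aestronglyMeasurable.mul c1.aestronglyMeasurable).mul c2.aestronglyMeasurable
    · -- bound
      have hev : ∀ᶠ t in atTop, ν/2 < lam1 t := hl1.eventually (eventually_gt_nhds (by linarith))
      filter_upwards [hev] with t ht
      apply Filter.Eventually.of_forall
      intro p
      have hs1 : 0 < Real.sqrt (lam1 t) := Real.sqrt_pos.mpr (hlam1pos t)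
      have hle : Real.sqrt (ν/2) ≤ Real.sqrt (lam1 t) := Real.sqrt_le_sqrt ht.le
      rw [Real.norm_eq_abs, abs_mul, abs_mul]
      have e1 : |stdGauss ((dot p (v1 t) - dot (m t) (v1 t)) / Real.sqrt (lam1 t)) /
          Real.sqrt (lam1 t)| ≤ 1 / Real.sqrt (ν/2) := by
        rw [abs_div, abs_of_pos hs1]
        calc |stdGauss _| / Real.sqrt (lam1 t) ≤ 1 / Real.sqrt (lam1 t) := by
              gcongr; exact stdGauss_abs_le_one _
          _ ≤ 1 / Real.sqrt (ν/2) := by gcongr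
      have e2 : |stdGauss ((dot p (v2 t) - dot (m t) (v2 t)) / Real.sqrt (lam2 t))| ≤ 1 :=
        stdGauss_abs_le_one _
      have hm := mul_le_mul (mul_le_mul_of_nonneg_left e1 (abs_nonneg (f p))) e2
        (abs_nonneg _) (by positivity)
      simpa using hm
    · exact hf1.abs.mul_const _
    · -- pointwise limit
      apply Filter.Eventually.of_forall
      intro p
      have hdc1 : Continuous fun q : ℝ × ℝ => dot p q := by unfold dot; fun_prop
      have hd1 : Tendsto (fun t => dot p (v1 t)) atTop (nhds (dot p w1)) :=
        (hdc1.tendsto w1).comp hv1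
      have hd2 : Tendsto (fun t => dot p (v2 t)) atTop (nhds (dot p w2)) :=
        (hdc1.tendsto w2).comp hv2
      have hsv : Tendsto (fun t => Real.sqrt (lam1 t)) atTop (nhds (Real.sqrt ν)) :=
        (Real.continuous_sqrt.tendsto ν).comp hl1
      have hsvne : Real.sqrt ν ≠ 0 := (Real.sqrt_pos.mpr hν).ne'
      have hA : Tendsto (fun t =>
          stdGauss ((dot p (v1 t) - dot (m t) (v1 t)) / Real.sqrt (lam1 t)) /
            Real.sqrt (lam1 t)) atTop
          (nhds (stdGauss (dot p w1 / Real.sqrt ν) / Real.sqrt ν)) := by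
        apply Tendsto.div _ hsv hsvne
        have hnum : Tendsto (fun t => dot p (v1 t) - dot (m t) (v1 t)) atTop
            (nhds (dot p w1)) := by
          have := hd1.sub hm1
          simpa using this
        exact (stdGauss_cont.tendsto _).comp (hnum.div hsv hsvne)
      have hinv : Tendsto (fun t => (lam2 t)⁻¹) atTop (nhds 0) := hl2.inv_tendsto_atTop
      have hbl : Tendsto (fun t => dot (m t) (v2 t) / lam2 t) atTop (nhds 0) := by
        rw [tendsto_zero_iff_abs_tendsto_zero]
        have hsq : Tendsto (fun t => (dot (m t) (v2 t) / lam2 t)^2) atTop (nhds 0) := by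
          have e : (fun t => (dot (m t) (v2 t) / lam2 t)^2)
              = fun t => (dot (m t) (v2 t)^2 / lam2 t) * (lam2 t)⁻¹ := by
            funext t
            rw [div_pow, pow_two (lam2 t), ← div_div, div_eq_mul_inv]
          rw [e]
          simpa using hm2.mul hinv
        have := (Real.continuous_sqrt.tendsto 0).comp hsq
        rw [Real.sqrt_zero] at this
        apply this.congr
        intro t
        exact Real.sqrt_sq_eq_abs _
      have hx2 : Tendsto (fun t =>
          ((dot p (v2 t) - dot (m t) (v2 t)) / Real.sqrt (lam2 t))^2) atTop (nhds L) := by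
        have e : ∀ t, ((dot p (v2 t) - dot (m t) (v2 t)) / Real.sqrt (lam2 t))^2
            = (dot p (v2 t))^2 * (lam2 t)⁻¹ -
              2 * (dot p (v2 t) * (dot (m t) (v2 t) / lam2 t)) +
              dot (m t) (v2 t)^2 / lam2 t := by
          intro t
          rw [div_pow, Real.sq_sqrt (hlam2pos t).le]
          have h0 : lam2 t ≠ 0 := (hlam2pos t).ne'
          field_simp
          ring
        simp only [e]
        have h1' : Tendsto (fun t => (dot p (v2 t))^2 * (lam2 t)⁻¹) atTop (nhds 0) := by
          simpa using (hd2.pow 2).mul hinv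
        have h2' : Tendsto (fun t =>
            2 * (dot p (v2 t) * (dot (m t) (v2 t) / lam2 t))) atTop (nhds 0) := by
          simpa using (hd2.mul hbl).const_mul 2
        have := (h1'.sub h2').add hm2
        simpa using this
      have hB : Tendsto (fun t =>
          stdGauss ((dot p (v2 t) - dot (m t) (v2 t)) / Real.sqrt (lam2 t))) atTop
          (nhds C) := by
        have gcont : Continuous (fun s : ℝ => Real.exp (-s/2) / Real.sqrt (2*Real.pi)) := by
          fun_prop
        have := (gcont.tendsto L).comp hx2
        apply Tendsto.congr _ this
        intro t
        rfl
      exact (tendsto_const_nhds.mul hA).mul hB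
  rw [← hRHS] at key
  exact Tendsto.congr (fun t => (hLHS t).symm) key
end

section
/- Let w₁ = (−1,1)/√2 and w₂ = (1,1)/√2, let v₁, v₂ be an orthonormal basis of ℝ², let λ₁ ≥ 0, ν ≥ 0, m₁ ∈ ℝ, c₂ > 0, and set c = max{√2/c₂, 2/c₂²}. Define the linear maps A = λ₁^{1/2} v₁⊗e₁ + v₂⊗e₂ and A_∞ = ν^{1/2} w₁⊗e₁ + w₂⊗e₂, and the measures μ₁ = γ(dy₁) ⊗ dy₂ and μ₂ = γ(dy₁) ⊗ |y₂| dy₂ on ℝ², where γ is the standard Gaussian measure on ℝ. For M ≥ 1 let K = [−M, M]². Then for i = 1, 2: ∫_{ℝ²∖K} ( e^{−c₂‖A y + m₁ v₁‖₂} + e^{−c₂‖A_∞ y‖₂} ) dμ_i(y) ≤ 4 [ c e^{−M/c}(M + 1) + c e^{−M²/2} ]. -/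
open MeasureTheory Filter

/-- Euclidean norm on `ℝ × ℝ`. -/
noncomputable def enorm2 (p : ℝ × ℝ) : ℝ := Real.sqrt (p.1 ^ 2 + p.2 ^ 2)

open Set


lemma tail_exp {b : ℝ} (hb : 0 < b) (a : ℝ) :
    (∫ t in Set.Ioi a, Real.exp (-(b*t))) = Real.exp (-(b*a)) / b := by
  have hderiv : ∀ x ∈ Set.Ici a, HasDerivAt (fun t => -Real.exp (-(b*t)) / b)
      (Real.exp (-(b*x))) x := by
    intro x _
    have h1 : HasDerivAt (fun t : ℝ => -(b*t)) (-b) x := by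
      exact ((hasDerivAt_id x).const_mul b).neg.congr_deriv (by ring)
    have h2 := (h1.exp.neg).div_const b
    refine h2.congr_deriv ?_
    rw [mul_neg, neg_neg, mul_div_assoc, div_self hb.ne', mul_one]
  have hint : IntegrableOn (fun x => Real.exp (-(b*x))) (Set.Ioi a) := by
    simpa [neg_mul] using exp_neg_integrableOn_Ioi a hb
  have htend : Tendsto (fun t => -Real.exp (-(b*t)) / b) atTop (nhds 0) := by
    have h0 : Tendsto (fun t : ℝ => b * t) atTop atTop :=
      Tendsto.const_mul_atTop hb tendsto_id
    have := (Real.tendsto_exp_neg_atTop_nhds_zero.comp h0).neg.div_const b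
    simpa using this
  rw [integral_Ioi_of_hasDerivAt_of_tendsto' hderiv hint htend]
  field_simp
  ring

lemma texp_deriv {b : ℝ} (hb : 0 < b) (x : ℝ) :
    HasDerivAt (fun t => -(((b*t) * Real.exp (-(b*t)) + Real.exp (-(b*t))) / b^2))
      (x * Real.exp (-(b*x))) x := by
  have hbt : HasDerivAt (fun t : ℝ => b * t) b x := by
    simpa using (hasDerivAt_id x).const_mul b
  have hexp : HasDerivAt (fun t : ℝ => Real.exp (-(b*t))) (Real.exp (-(b*x)) * (-b)) x :=
    hbt.neg.exp
  have h := (((hbt.mul hexp).add hexp).div_const (b^2)).neg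
  refine h.congr_deriv ?_
  rw [neg_div', div_eq_iff (pow_ne_zero 2 hb.ne')]
  ring

lemma texp_tendsto {b : ℝ} (hb : 0 < b) :
    Tendsto (fun t => -(((b*t) * Real.exp (-(b*t)) + Real.exp (-(b*t))) / b^2))
      atTop (nhds 0) := by
  have h0 : Tendsto (fun t : ℝ => b * t) atTop atTop :=
    Tendsto.const_mul_atTop hb tendsto_id
  have h1 : Tendsto (fun t : ℝ => (b*t) * Real.exp (-(b*t))) atTop (nhds 0) := by
    have := (Real.tendsto_pow_mul_exp_neg_atTop_nhds_zero 1).comp h0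
    simpa [Function.comp_def] using this
  have h2 : Tendsto (fun t : ℝ => Real.exp (-(b*t))) atTop (nhds 0) :=
    Real.tendsto_exp_neg_atTop_nhds_zero.comp h0
  have := ((h1.add h2).div_const (b^2)).neg
  simpa using this

lemma texp_integrableOn {b : ℝ} (hb : 0 < b) {a : ℝ} (ha : 0 ≤ a) :
    IntegrableOn (fun t => t * Real.exp (-(b*t))) (Set.Ioi a) := by
  refine integrableOn_Ioi_deriv_of_nonneg' (fun x _ => texp_deriv hb x) ?_ (texp_tendsto hb)
  intro x hx
  have : (0:ℝ) < x := lt_of_le_of_lt ha hx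
  positivity

lemma texp_tail {b : ℝ} (hb : 0 < b) {a : ℝ} (ha : 0 ≤ a) :
    (∫ t in Set.Ioi a, t * Real.exp (-(b*t))) = Real.exp (-(b*a)) * (a/b + 1/b^2) := by
  rw [integral_Ioi_of_hasDerivAt_of_nonneg' (fun x _ => texp_deriv hb x)
    (fun x hx => by
      have : (0:ℝ) < x := lt_of_le_of_lt ha hx
      positivity) (texp_tendsto hb)]
  field_simp
  ring

lemma integrableOn_reflect {f : ℝ → ℝ} (heven : ∀ x, f (-x) = f x) {s : Set ℝ}
    (h : IntegrableOn f s) : IntegrableOn f ((fun x : ℝ => -x) ⁻¹' s) := by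
  have := (MeasurePreserving.integrableOn_comp_preimage
    (Measure.measurePreserving_neg (volume : Measure ℝ))
    (Homeomorph.neg ℝ).measurableEmbedding).2 h
  have hfe : (f ∘ fun x : ℝ => -x) = f := funext fun x => heven x
  simpa [hfe] using this

lemma integrable_of_even {f : ℝ → ℝ} (heven : ∀ x, f (-x) = f x)
    (h : IntegrableOn f (Set.Ici 0)) : Integrable f := by
  have h2 : IntegrableOn f (Set.Iic 0) := by
    have := integrableOn_reflect heven h
    simpa using this
  have h3 : IntegrableOn f (Set.Iic 0 ∪ Set.Ioi 0) :=
    integrableOn_union.2 ⟨h2, h.mono_set Set.Ioi_subset_Ici_self⟩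
  rwa [Set.Iic_union_Ioi, integrableOn_univ] at h3

lemma integral_reflect_Iio {f : ℝ → ℝ} (heven : ∀ x, f (-x) = f x) (M : ℝ) :
    (∫ x in Set.Iio (-M), f x) = ∫ x in Set.Ioi M, f x := by
  rw [← integral_Iic_eq_integral_Iio, ← integral_comp_neg_Ioi]
  simp only [heven]

lemma gauss_texp_tail {M : ℝ} (hM : 0 < M) :
    (∫ x in Set.Ioi M, x * Real.exp (-(x^2/2))) = Real.exp (-(M^2/2)) ∧
    IntegrableOn (fun x => x * Real.exp (-(x^2/2))) (Set.Ioi M) := by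
  have hderiv : ∀ x ∈ Set.Ici M, HasDerivAt (fun t => -Real.exp (-(t^2/2)))
      (x * Real.exp (-(x^2/2))) x := by
    intro x _
    have h1 : HasDerivAt (fun t : ℝ => -(t^2/2)) (-x) x := by
      exact (((hasDerivAt_pow 2 x)).div_const 2).neg.congr_deriv (by norm_num)
    have := h1.exp.neg
    exact this.congr_deriv (by ring)
  have hpos : ∀ x ∈ Set.Ioi M, 0 ≤ x * Real.exp (-(x^2/2)) := by
    intro x hx
    have : (0:ℝ) < x := lt_trans hM hx
    positivity
  have htend : Tendsto (fun t => -Real.exp (-(t^2/2))) atTop (nhds 0) := by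
    have h0 : Tendsto (fun t : ℝ => t^2/2) atTop atTop :=
      (tendsto_pow_atTop (two_ne_zero)).atTop_div_const two_pos
    have h1 : Tendsto (fun t : ℝ => -(t^2/2)) atTop atBot :=
      tendsto_neg_atBot_iff.2 h0
    simpa using Real.tendsto_exp_atBot.comp h1 |>.neg
  constructor
  · rw [integral_Ioi_of_hasDerivAt_of_nonneg' hderiv hpos htend]; ring
  · exact integrableOn_Ioi_deriv_of_nonneg' hderiv hpos htend

lemma gaussPDF_eq (x : ℝ) :
    ProbabilityTheory.gaussianPDFReal 0 1 x = (Real.sqrt (2*Real.pi))⁻¹ * Real.exp (-(x^2/2)) := by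
  unfold ProbabilityTheory.gaussianPDFReal
  norm_num
  exact Or.inl (by ring)

lemma gauss_tail {M : ℝ} (hM : 1 ≤ M) :
    (∫ x in Set.Ioi M, ProbabilityTheory.gaussianPDFReal 0 1 x) ≤ Real.exp (-(M^2/2)) / 2 := by
  have hM0 : (0:ℝ) < M := lt_of_lt_of_le one_pos hM
  obtain ⟨hval, hint⟩ := gauss_texp_tail hM0
  have hle : ∀ x ∈ Set.Ioi M, ProbabilityTheory.gaussianPDFReal 0 1 x ≤
      (1/2) * (x * Real.exp (-(x^2/2))) := by
    intro x hx
    rw [gaussPDF_eq]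
    have hx1 : (1:ℝ) ≤ x := le_trans hM (le_of_lt hx)
    have hsq : (2:ℝ) ≤ Real.sqrt (2*Real.pi) := by
      have h2pi : Real.sqrt (2*Real.pi) ^ 2 = 2*Real.pi := Real.sq_sqrt (by positivity)
      have hnn := Real.sqrt_nonneg (2*Real.pi)
      nlinarith [Real.pi_gt_three]
    have h1 : (Real.sqrt (2*Real.pi))⁻¹ ≤ 1/2 := by
      rw [inv_le_comm₀ (by linarith) (by norm_num)]
      simpa using hsq
    have he : (0:ℝ) < Real.exp (-(x^2/2)) := Real.exp_pos _
    calc (Real.sqrt (2*Real.pi))⁻¹ * Real.exp (-(x^2/2))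
        ≤ (1/2) * Real.exp (-(x^2/2)) := by nlinarith
      _ ≤ (1/2) * (x * Real.exp (-(x^2/2))) := by nlinarith
  calc (∫ x in Set.Ioi M, ProbabilityTheory.gaussianPDFReal 0 1 x)
      ≤ ∫ x in Set.Ioi M, (1/2) * (x * Real.exp (-(x^2/2))) := by
        refine setIntegral_mono_on ?_ (hint.const_mul _) measurableSet_Ioi hle
        exact (ProbabilityTheory.integrable_gaussianPDFReal 0 1).integrableOn
    _ = Real.exp (-(M^2/2)) / 2 := by
        rw [MeasureTheory.integral_const_mul, hval]; ring

lemma gaussPDF_even (x : ℝ) :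
    ProbabilityTheory.gaussianPDFReal 0 1 (-x) = ProbabilityTheory.gaussianPDFReal 0 1 x := by
  simp [ProbabilityTheory.gaussianPDFReal]

lemma gauss_compl {M : ℝ} (hM : 1 ≤ M) :
    ProbabilityTheory.gaussianReal 0 1 (Set.Icc (-M) M)ᶜ
      ≤ ENNReal.ofReal (Real.exp (-(M^2/2))) := by
  have hc : (Set.Icc (-M) M)ᶜ = Set.Iio (-M) ∪ Set.Ioi M := by
    ext x
    simp only [Set.mem_compl_iff, Set.mem_Icc, not_and_or, not_le, Set.mem_union,
      Set.mem_Iio, Set.mem_Ioi]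
  rw [hc]
  refine le_trans (measure_union_le _ _) ?_
  have h1 : ProbabilityTheory.gaussianReal 0 1 (Set.Iio (-M))
      = ENNReal.ofReal (∫ x in Set.Iio (-M), ProbabilityTheory.gaussianPDFReal 0 1 x) :=
    ProbabilityTheory.gaussianReal_apply_eq_integral 0 one_ne_zero _
  have h2 : ProbabilityTheory.gaussianReal 0 1 (Set.Ioi M)
      = ENNReal.ofReal (∫ x in Set.Ioi M, ProbabilityTheory.gaussianPDFReal 0 1 x) :=
    ProbabilityTheory.gaussianReal_apply_eq_integral 0 one_ne_zero _
  rw [h1, h2, integral_reflect_Iio gaussPDF_even]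
  have := gauss_tail hM
  calc ENNReal.ofReal (∫ x in Set.Ioi M, ProbabilityTheory.gaussianPDFReal 0 1 x)
        + ENNReal.ofReal (∫ x in Set.Ioi M, ProbabilityTheory.gaussianPDFReal 0 1 x)
      ≤ ENNReal.ofReal (Real.exp (-(M^2/2))/2) + ENNReal.ofReal (Real.exp (-(M^2/2))/2) := by
        gcongr <;> exact this
    _ = ENNReal.ofReal (Real.exp (-(M^2/2))) := by
        rw [← ENNReal.ofReal_add (by positivity) (by positivity)]
        ring_nf

lemma core {c₂ M L T : ℝ} (hM : 1 ≤ M) (hL : 0 ≤ L) (hT : 0 ≤ T)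
    (ν : Measure ℝ) [SFinite ν]
    (hLb : ∫⁻ t, ENNReal.ofReal (2 * Real.exp (-(c₂ * |t|))) ∂ν ≤ ENNReal.ofReal L)
    (hTb : ∫⁻ t in (Set.Icc (-M) M)ᶜ, ENNReal.ofReal (2 * Real.exp (-(c₂ * |t|))) ∂ν
      ≤ ENNReal.ofReal T)
    (f : ℝ × ℝ → ℝ) (hf_cont : Continuous f) (hf_nonneg : ∀ y, 0 ≤ f y)
    (hf_le : ∀ y : ℝ × ℝ, f y ≤ 2 * Real.exp (-(c₂ * |y.2|))) :
    (∫ y in ((Set.Icc (-M) M ×ˢ Set.Icc (-M) M : Set (ℝ × ℝ)))ᶜ, f y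
        ∂((ProbabilityTheory.gaussianReal 0 1).prod ν))
      ≤ Real.exp (-(M^2/2)) * L + T := by
  set γ := ProbabilityTheory.gaussianReal 0 1 with hγ
  set μ := γ.prod ν with hμ
  set K : Set (ℝ × ℝ) := Set.Icc (-M) M ×ˢ Set.Icc (-M) M with hK
  have hg_meas : Measurable fun y : ℝ × ℝ => ENNReal.ofReal (2 * Real.exp (-(c₂ * |y.2|))) := by
    fun_prop
  have h1 : (∫ y in Kᶜ, f y ∂μ) = (∫⁻ y in Kᶜ, ENNReal.ofReal (f y) ∂μ).toReal := by
    rw [integral_eq_lintegral_of_nonneg_ae (Filter.Eventually.of_forall hf_nonneg)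
      hf_cont.aestronglyMeasurable]
  have key : (∫⁻ y in Kᶜ, ENNReal.ofReal (f y) ∂μ)
      ≤ ENNReal.ofReal (Real.exp (-(M^2/2)) * L + T) := by
    have step1 : (∫⁻ y in Kᶜ, ENNReal.ofReal (f y) ∂μ)
        ≤ ∫⁻ y in Kᶜ, ENNReal.ofReal (2 * Real.exp (-(c₂ * |y.2|))) ∂μ :=
      lintegral_mono fun y => ENNReal.ofReal_le_ofReal (hf_le y)
    have hsplit : Kᶜ = ((Set.Icc (-M) M)ᶜ ×ˢ (Set.univ : Set ℝ)) ∪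
        ((Set.univ : Set ℝ) ×ˢ (Set.Icc (-M) M)ᶜ) := by
      rw [hK, Set.compl_prod_eq_union]
    have step2 : (∫⁻ y in Kᶜ, ENNReal.ofReal (2 * Real.exp (-(c₂ * |y.2|))) ∂μ)
        ≤ (∫⁻ y in ((Set.Icc (-M) M)ᶜ ×ˢ (Set.univ : Set ℝ)),
            ENNReal.ofReal (2 * Real.exp (-(c₂ * |y.2|))) ∂μ) +
          (∫⁻ y in ((Set.univ : Set ℝ) ×ˢ (Set.Icc (-M) M)ᶜ),
            ENNReal.ofReal (2 * Real.exp (-(c₂ * |y.2|))) ∂μ) := by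
      rw [hsplit]
      exact lintegral_union_le _ _ _
    have hprodA : (∫⁻ y in ((Set.Icc (-M) M)ᶜ ×ˢ (Set.univ : Set ℝ)),
          ENNReal.ofReal (2 * Real.exp (-(c₂ * |y.2|))) ∂μ)
        = γ ((Set.Icc (-M) M)ᶜ) * ∫⁻ t, ENNReal.ofReal (2 * Real.exp (-(c₂ * |t|))) ∂ν := by
      rw [hμ, ← Measure.prod_restrict, lintegral_prod _ hg_meas.aemeasurable]
      simp [lintegral_const, Measure.restrict_apply_univ, mul_comm]
    have hprodB : (∫⁻ y in ((Set.univ : Set ℝ) ×ˢ (Set.Icc (-M) M)ᶜ),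
          ENNReal.ofReal (2 * Real.exp (-(c₂ * |y.2|))) ∂μ)
        = ∫⁻ t in (Set.Icc (-M) M)ᶜ, ENNReal.ofReal (2 * Real.exp (-(c₂ * |t|))) ∂ν := by
      rw [hμ, ← Measure.prod_restrict, lintegral_prod _ hg_meas.aemeasurable]
      simp [lintegral_const, Measure.restrict_apply_univ]
    calc (∫⁻ y in Kᶜ, ENNReal.ofReal (f y) ∂μ)
        ≤ _ + _ := le_trans step1 step2
      _ ≤ ENNReal.ofReal (Real.exp (-(M^2/2))) * ENNReal.ofReal L + ENNReal.ofReal T := by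
          rw [hprodA, hprodB]
          exact add_le_add (mul_le_mul' (gauss_compl hM) hLb) hTb
      _ = ENNReal.ofReal (Real.exp (-(M^2/2)) * L + T) := by
          rw [← ENNReal.ofReal_mul (by positivity), ← ENNReal.ofReal_add (by positivity) hT]
  rw [h1]
  exact ENNReal.toReal_le_of_le_ofReal (by positivity) key

lemma Icc_compl_eq (M : ℝ) : (Set.Icc (-M) M)ᶜ = Set.Iio (-M) ∪ Set.Ioi M := by
  ext x
  simp only [Set.mem_compl_iff, Set.mem_Icc, not_and_or, not_le, Set.mem_union,
    Set.mem_Iio, Set.mem_Ioi]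

-- the two integrands
lemma g1_even (c₂ x : ℝ) : 2 * Real.exp (-(c₂ * |(-x)|)) = 2 * Real.exp (-(c₂ * |x|)) := by
  rw [abs_neg]
lemma g1_integrable {c₂ : ℝ} (hc₂ : 0 < c₂) :
    Integrable (fun t => 2 * Real.exp (-(c₂ * |t|))) := by
  apply integrable_of_even (fun x => g1_even c₂ x)
  rw [integrableOn_Ici_iff_integrableOn_Ioi]
  have base : IntegrableOn (fun x : ℝ => 2 * Real.exp (-(c₂ * x))) (Set.Ioi 0) := by
    have := (exp_neg_integrableOn_Ioi 0 hc₂).const_mul 2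
    simpa [neg_mul, IntegrableOn] using this
  refine base.congr_fun ?_ measurableSet_Ioi
  intro x hx
  simp only
  rw [abs_of_pos hx]
lemma g1_integral {c₂ : ℝ} (hc₂ : 0 < c₂) :
    (∫ t, 2 * Real.exp (-(c₂ * |t|))) = 4 / c₂ := by
  have h := integral_comp_abs (f := fun x => 2 * Real.exp (-(c₂ * x)))
  rw [h, MeasureTheory.integral_const_mul, tail_exp hc₂ 0]
  norm_num
  field_simp
  ring
lemma g1_tail {c₂ M : ℝ} (hc₂ : 0 < c₂) (hM : 1 ≤ M) :
    (∫ t in (Set.Icc (-M) M)ᶜ, 2 * Real.exp (-(c₂ * |t|)))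
      = 4 * Real.exp (-(c₂ * M)) / c₂ := by
  rw [Icc_compl_eq]
  have hdisj : Disjoint (Set.Iio (-M)) (Set.Ioi M) := by
    apply Set.disjoint_left.2
    intro x hx hx'
    simp only [Set.mem_Iio] at hx
    simp only [Set.mem_Ioi] at hx'
    linarith
  rw [setIntegral_union hdisj measurableSet_Ioi
    ((g1_integrable hc₂).integrableOn) ((g1_integrable hc₂).integrableOn),
    integral_reflect_Iio (fun x => g1_even c₂ x)]
  have hcong : (∫ t in Set.Ioi M, 2 * Real.exp (-(c₂ * |t|)))
      = ∫ t in Set.Ioi M, 2 * Real.exp (-(c₂ * t)) := by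
    refine setIntegral_congr_fun measurableSet_Ioi fun x hx => ?_
    rw [abs_of_pos (lt_of_lt_of_le one_pos (le_trans hM (le_of_lt hx)))]
  rw [hcong, MeasureTheory.integral_const_mul, tail_exp hc₂ M]
  field_simp
  ring

lemma g2_even (c₂ x : ℝ) :
    |(-x)| * (2 * Real.exp (-(c₂ * |(-x)|))) = |x| * (2 * Real.exp (-(c₂ * |x|))) := by
  rw [abs_neg]
lemma g2_integrable {c₂ : ℝ} (hc₂ : 0 < c₂) :
    Integrable (fun t => |t| * (2 * Real.exp (-(c₂ * |t|)))) := by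
  apply integrable_of_even (fun x => g2_even c₂ x)
  rw [integrableOn_Ici_iff_integrableOn_Ioi]
  have base : IntegrableOn (fun x : ℝ => 2 * (x * Real.exp (-(c₂ * x)))) (Set.Ioi 0) :=
    (texp_integrableOn hc₂ le_rfl).const_mul 2
  refine base.congr_fun ?_ measurableSet_Ioi
  intro x hx
  simp only
  rw [abs_of_pos hx]; ring
lemma g2_integral {c₂ : ℝ} (hc₂ : 0 < c₂) :
    (∫ t, |t| * (2 * Real.exp (-(c₂ * |t|)))) = 4 / c₂ ^ 2 := by
  have h := integral_comp_abs (f := fun x => x * (2 * Real.exp (-(c₂ * x))))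
  rw [h]
  have hcong : (∫ t in Set.Ioi (0:ℝ), t * (2 * Real.exp (-(c₂ * t))))
      = ∫ t in Set.Ioi (0:ℝ), 2 * (t * Real.exp (-(c₂ * t))) := by
    refine setIntegral_congr_fun measurableSet_Ioi fun x _ => by ring
  rw [hcong, MeasureTheory.integral_const_mul, texp_tail hc₂ le_rfl]
  norm_num
  field_simp
  ring
lemma g2_tail {c₂ M : ℝ} (hc₂ : 0 < c₂) (hM : 1 ≤ M) :
    (∫ t in (Set.Icc (-M) M)ᶜ, |t| * (2 * Real.exp (-(c₂ * |t|))))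
      = 4 * Real.exp (-(c₂ * M)) * (M / c₂ + 1 / c₂ ^ 2) := by
  rw [Icc_compl_eq]
  have hdisj : Disjoint (Set.Iio (-M)) (Set.Ioi M) := by
    apply Set.disjoint_left.2
    intro x hx hx'
    simp only [Set.mem_Iio] at hx
    simp only [Set.mem_Ioi] at hx'
    linarith
  rw [setIntegral_union hdisj measurableSet_Ioi
    ((g2_integrable hc₂).integrableOn) ((g2_integrable hc₂).integrableOn),
    integral_reflect_Iio (fun x => g2_even c₂ x)]
  have hcong : (∫ t in Set.Ioi M, |t| * (2 * Real.exp (-(c₂ * |t|))))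
      = ∫ t in Set.Ioi M, 2 * (t * Real.exp (-(c₂ * t))) := by
    refine setIntegral_congr_fun measurableSet_Ioi fun x hx => ?_
    rw [abs_of_pos (lt_of_lt_of_le one_pos (le_trans hM (le_of_lt hx)))]; ring
  have hM0 : (0:ℝ) ≤ M := le_trans zero_le_one hM
  rw [hcong, MeasureTheory.integral_const_mul, texp_tail hc₂ hM0]
  ring


lemma lint_vol_L {c₂ : ℝ} (hc₂ : 0 < c₂) :
    (∫⁻ t, ENNReal.ofReal (2 * Real.exp (-(c₂ * |t|))) ∂(volume : Measure ℝ))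
      = ENNReal.ofReal (4 / c₂) := by
  rw [← ofReal_integral_eq_lintegral_ofReal (g1_integrable hc₂)
    (Filter.Eventually.of_forall fun x => by positivity), g1_integral hc₂]

lemma lint_vol_T {c₂ M : ℝ} (hc₂ : 0 < c₂) (hM : 1 ≤ M) :
    (∫⁻ t in (Set.Icc (-M) M)ᶜ, ENNReal.ofReal (2 * Real.exp (-(c₂ * |t|)))
        ∂(volume : Measure ℝ))
      = ENNReal.ofReal (4 * Real.exp (-(c₂ * M)) / c₂) := by
  rw [← ofReal_integral_eq_lintegral_ofReal ((g1_integrable hc₂).integrableOn)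
    (Filter.Eventually.of_forall fun x => by positivity), g1_tail hc₂ hM]

lemma lint_den_L {c₂ : ℝ} (hc₂ : 0 < c₂) :
    (∫⁻ t, ENNReal.ofReal (2 * Real.exp (-(c₂ * |t|)))
        ∂(volume.withDensity fun y => ENNReal.ofReal |y|))
      = ENNReal.ofReal (4 / c₂ ^ 2) := by
  rw [lintegral_withDensity_eq_lintegral_mul volume (by fun_prop) (by fun_prop)]
  have heq : ∀ t : ℝ, ((fun y => ENNReal.ofReal |y|) *
      fun y => ENNReal.ofReal (2 * Real.exp (-(c₂ * |y|)))) t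
      = ENNReal.ofReal (|t| * (2 * Real.exp (-(c₂ * |t|)))) := by
    intro t
    simp only [Pi.mul_apply]
    rw [← ENNReal.ofReal_mul (abs_nonneg t)]
  rw [lintegral_congr heq,
    ← ofReal_integral_eq_lintegral_ofReal (g2_integrable hc₂)
      (Filter.Eventually.of_forall fun x => by positivity), g2_integral hc₂]

lemma lint_den_T {c₂ M : ℝ} (hc₂ : 0 < c₂) (hM : 1 ≤ M) :
    (∫⁻ t in (Set.Icc (-M) M)ᶜ, ENNReal.ofReal (2 * Real.exp (-(c₂ * |t|)))
        ∂(volume.withDensity fun y => ENNReal.ofReal |y|))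
      = ENNReal.ofReal (4 * Real.exp (-(c₂ * M)) * (M / c₂ + 1 / c₂ ^ 2)) := by
  rw [restrict_withDensity (measurableSet_Icc.compl),
    lintegral_withDensity_eq_lintegral_mul _ (by fun_prop) (by fun_prop)]
  have heq : ∀ t : ℝ, ((fun y => ENNReal.ofReal |y|) *
      fun y => ENNReal.ofReal (2 * Real.exp (-(c₂ * |y|)))) t
      = ENNReal.ofReal (|t| * (2 * Real.exp (-(c₂ * |t|)))) := by
    intro t
    simp only [Pi.mul_apply]
    rw [← ENNReal.ofReal_mul (abs_nonneg t)]
  rw [lintegral_congr heq,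
    ← ofReal_integral_eq_lintegral_ofReal ((g2_integrable hc₂).integrableOn)
      (Filter.Eventually.of_forall fun x => by positivity), g2_tail hc₂ hM]

lemma bound1 {c₂ lam1 m1 : ℝ} (hc₂ : 0 < c₂) (v1 v2 : ℝ × ℝ)
    (h11 : dot v1 v1 = 1) (h22 : dot v2 v2 = 1) (h12 : dot v1 v2 = 0) (y : ℝ × ℝ) :
    Real.exp (-c₂ * enorm2 ((Real.sqrt lam1 * y.1) • v1 + y.2 • v2 + m1 • v1))
      ≤ Real.exp (-(c₂ * |y.2|)) := by
  have h11' : v1.1 * v1.1 + v1.2 * v1.2 = 1 := h11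
  have h22' : v2.1 * v2.1 + v2.2 * v2.2 = 1 := h22
  have h12' : v1.1 * v2.1 + v1.2 * v2.2 = 0 := h12
  apply Real.exp_le_exp.2
  have hx : ((Real.sqrt lam1 * y.1) • v1 + y.2 • v2 + m1 • v1) =
      ((Real.sqrt lam1 * y.1) * v1.1 + y.2 * v2.1 + m1 * v1.1,
       (Real.sqrt lam1 * y.1) * v1.2 + y.2 * v2.2 + m1 * v1.2) := rfl
  have key : |y.2| ≤ enorm2 ((Real.sqrt lam1 * y.1) • v1 + y.2 • v2 + m1 • v1) := by
    rw [hx]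
    unfold enorm2
    simp only
    have hid : ((Real.sqrt lam1 * y.1) * v1.1 + y.2 * v2.1 + m1 * v1.1)^2
        + ((Real.sqrt lam1 * y.1) * v1.2 + y.2 * v2.2 + m1 * v1.2)^2
        = (Real.sqrt lam1 * y.1 + m1)^2 * (v1.1 * v1.1 + v1.2 * v1.2)
          + y.2^2 * (v2.1 * v2.1 + v2.2 * v2.2)
          + 2 * (Real.sqrt lam1 * y.1 + m1) * y.2 * (v1.1 * v2.1 + v1.2 * v2.2) := by
      ring
    rw [h11', h22', h12'] at hid
    calc |y.2| = Real.sqrt (y.2^2) := (Real.sqrt_sq_eq_abs y.2).symm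
      _ ≤ _ := by
          apply Real.sqrt_le_sqrt
          rw [hid]
          nlinarith [sq_nonneg (Real.sqrt lam1 * y.1 + m1)]
  nlinarith [key, hc₂.le, abs_nonneg y.2]

lemma bound2 {c₂ ν : ℝ} (hc₂ : 0 < c₂) (y : ℝ × ℝ) :
    Real.exp (-c₂ * enorm2 ((Real.sqrt ν * y.1) •
        ((-1 / Real.sqrt 2, 1 / Real.sqrt 2) : ℝ × ℝ)
      + y.2 • ((1 / Real.sqrt 2, 1 / Real.sqrt 2) : ℝ × ℝ)))
      ≤ Real.exp (-(c₂ * |y.2|)) := by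
  have hs : Real.sqrt 2 ^ 2 = 2 := Real.sq_sqrt (by norm_num)
  have hs0 : (0:ℝ) < Real.sqrt 2 := Real.sqrt_pos.2 (by norm_num)
  apply Real.exp_le_exp.2
  set a := Real.sqrt ν * y.1 with ha
  have hx : ((Real.sqrt ν * y.1) • ((-1 / Real.sqrt 2, 1 / Real.sqrt 2) : ℝ × ℝ)
      + y.2 • ((1 / Real.sqrt 2, 1 / Real.sqrt 2) : ℝ × ℝ))
      = (a * (-1 / Real.sqrt 2) + y.2 * (1 / Real.sqrt 2),
         a * (1 / Real.sqrt 2) + y.2 * (1 / Real.sqrt 2)) := rfl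
  have key : |y.2| ≤ enorm2 ((Real.sqrt ν * y.1) •
      ((-1 / Real.sqrt 2, 1 / Real.sqrt 2) : ℝ × ℝ)
      + y.2 • ((1 / Real.sqrt 2, 1 / Real.sqrt 2) : ℝ × ℝ)) := by
    rw [hx]
    unfold enorm2
    simp only
    have hX : a * (-1 / Real.sqrt 2) + y.2 * (1 / Real.sqrt 2)
        = (y.2 - a) / Real.sqrt 2 := by ring
    have hY : a * (1 / Real.sqrt 2) + y.2 * (1 / Real.sqrt 2)
        = (a + y.2) / Real.sqrt 2 := by ring
    rw [hX, hY, div_pow, div_pow, hs]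
    calc |y.2| = Real.sqrt (y.2^2) := (Real.sqrt_sq_eq_abs y.2).symm
      _ ≤ _ := by
          apply Real.sqrt_le_sqrt
          nlinarith [sq_nonneg a]
  nlinarith [key, hc₂.le, abs_nonneg y.2]

lemma enorm2_continuous : Continuous enorm2 := by
  unfold enorm2
  exact ((continuous_fst.pow 2).add (continuous_snd.pow 2)).sqrt

theorem stmt_12 (lam1 ν m1 c₂ : ℝ) (hlam1 : 0 ≤ lam1) (hν : 0 ≤ ν) (hc₂ : 0 < c₂)
    (v1 v2 : ℝ × ℝ) (hv : dot v1 v1 = 1 ∧ dot v2 v2 = 1 ∧ dot v1 v2 = 0)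
    (M : ℝ) (hM : 1 ≤ M) :
    let w1 : ℝ × ℝ := (-1 / Real.sqrt 2, 1 / Real.sqrt 2)
    let w2 : ℝ × ℝ := (1 / Real.sqrt 2, 1 / Real.sqrt 2)
    let c := max (Real.sqrt 2 / c₂) (2 / c₂ ^ 2)
    let μ₁ : Measure (ℝ × ℝ) := (ProbabilityTheory.gaussianReal 0 1).prod volume
    let μ₂ : Measure (ℝ × ℝ) := (ProbabilityTheory.gaussianReal 0 1).prod
      (volume.withDensity fun y => ENNReal.ofReal |y|)
    let K : Set (ℝ × ℝ) := Set.Icc (-M) M ×ˢ Set.Icc (-M) M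
    -- `A y = λ₁^{1/2} y₁ v₁ + y₂ v₂` and `A_∞ y = ν^{1/2} y₁ w₁ + y₂ w₂`
    let integrand : ℝ × ℝ → ℝ := fun y =>
      Real.exp (-c₂ * enorm2 ((Real.sqrt lam1 * y.1) • v1 + y.2 • v2 + m1 • v1)) +
      Real.exp (-c₂ * enorm2 ((Real.sqrt ν * y.1) • w1 + y.2 • w2))
    (∫ y in Kᶜ, integrand y ∂μ₁) ≤
        4 * (c * Real.exp (-M / c) * (M + 1) + c * Real.exp (-M ^ 2 / 2)) ∧
      (∫ y in Kᶜ, integrand y ∂μ₂) ≤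
        4 * (c * Real.exp (-M / c) * (M + 1) + c * Real.exp (-M ^ 2 / 2)) := by
  intro w1 w2 c μ₁ μ₂ K integrand
  obtain ⟨h11, h22, h12⟩ := hv
  -- facts about c
  have hsqrt2 : (1:ℝ) ≤ Real.sqrt 2 := by
    rw [show (1:ℝ) = Real.sqrt 1 from Real.sqrt_one.symm]
    exact Real.sqrt_le_sqrt (by norm_num)
  have hc : 0 < c := lt_of_lt_of_le (by positivity) (le_max_left (Real.sqrt 2 / c₂) (2 / c₂ ^ 2))
  have hc1 : Real.sqrt 2 / c₂ ≤ c := le_max_left _ _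
  have hc2 : 2 / c₂ ^ 2 ≤ c := le_max_right _ _
  clear_value c
  have hinvc₂ : 1 / c₂ ≤ c := le_trans (by gcongr) hc1
  have hinvc₂sq : 1 / c₂ ^ 2 ≤ c := le_trans (by gcongr; norm_num) hc2
  have hcc₂ : 1 ≤ c * c₂ := by
    have : Real.sqrt 2 ≤ c * c₂ := by
      rw [div_le_iff₀ hc₂] at hc1; linarith
    linarith
  have hexp_rate : Real.exp (-(c₂ * M)) ≤ Real.exp (-M / c) := by
    apply Real.exp_le_exp.2
    rw [neg_div, neg_le_neg_iff, div_le_iff₀ hc]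
    nlinarith
  have hE : Real.exp (-M ^ 2 / 2) = Real.exp (-(M^2/2)) := by rw [neg_div]
  -- pointwise bound
  have hle : ∀ y : ℝ × ℝ, integrand y ≤ 2 * Real.exp (-(c₂ * |y.2|)) := by
    intro y
    have b1 := bound1 (lam1 := lam1) (m1 := m1) hc₂ v1 v2 h11 h22 h12 y
    have b2 := bound2 (ν := ν) hc₂ y
    show Real.exp _ + Real.exp _ ≤ _
    calc Real.exp (-c₂ * enorm2 ((Real.sqrt lam1 * y.1) • v1 + y.2 • v2 + m1 • v1)) +
        Real.exp (-c₂ * enorm2 ((Real.sqrt ν * y.1) • w1 + y.2 • w2))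
        ≤ Real.exp (-(c₂ * |y.2|)) + Real.exp (-(c₂ * |y.2|)) := add_le_add b1 b2
      _ = 2 * Real.exp (-(c₂ * |y.2|)) := by ring
  have hnonneg : ∀ y : ℝ × ℝ, 0 ≤ integrand y := by
    intro y
    show (0:ℝ) ≤ Real.exp _ + Real.exp _
    positivity
  have hcont : Continuous integrand := by
    show Continuous fun y : ℝ × ℝ =>
      Real.exp (-c₂ * enorm2 ((Real.sqrt lam1 * y.1) • v1 + y.2 • v2 + m1 • v1)) +
      Real.exp (-c₂ * enorm2 ((Real.sqrt ν * y.1) • w1 + y.2 • w2))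
    have hF1 : Continuous fun y : ℝ × ℝ =>
        (Real.sqrt lam1 * y.1) • v1 + y.2 • v2 + m1 • v1 := by
      exact (((continuous_const.mul continuous_fst).smul continuous_const).add
        (continuous_snd.smul continuous_const)).add continuous_const
    have hF2 : Continuous fun y : ℝ × ℝ => (Real.sqrt ν * y.1) • w1 + y.2 • w2 := by
      exact ((continuous_const.mul continuous_fst).smul continuous_const).add
        (continuous_snd.smul continuous_const)
    exact (Real.continuous_exp.comp
        (continuous_const.mul (enorm2_continuous.comp hF1))).add
      (Real.continuous_exp.comp (continuous_const.mul (enorm2_continuous.comp hF2)))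
  constructor
  · have h1 := core (c₂ := c₂) (M := M) hM (L := 4 / c₂)
      (T := 4 * Real.exp (-(c₂ * M)) / c₂) (by positivity) (by positivity)
      volume (le_of_eq (lint_vol_L hc₂)) (le_of_eq (lint_vol_T hc₂ hM))
      integrand hcont hnonneg hle
    refine le_trans h1 ?_
    rw [hE]
    have e1 : Real.exp (-(M^2/2)) * (4 / c₂) ≤ 4 * (c * Real.exp (-(M^2/2))) := by
      have h0 := mul_le_mul_of_nonneg_left hinvc₂ (Real.exp_pos (-(M^2/2))).le
      calc Real.exp (-(M^2/2)) * (4 / c₂)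
          = 4 * (Real.exp (-(M^2/2)) * (1 / c₂)) := by ring
        _ ≤ 4 * (Real.exp (-(M^2/2)) * c) := by linarith [h0]
        _ = 4 * (c * Real.exp (-(M^2/2))) := by ring
    have e2 : 4 * Real.exp (-(c₂ * M)) / c₂ ≤ 4 * (c * Real.exp (-M / c) * (M + 1)) := by
      have h3 : Real.exp (-(c₂ * M)) * (1 / c₂) ≤ Real.exp (-M / c) * c :=
        mul_le_mul hexp_rate hinvc₂ (by positivity) (Real.exp_pos _).le
      have h5 := mul_le_mul_of_nonneg_left (show (1:ℝ) ≤ M + 1 by linarith)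
        (mul_nonneg (Real.exp_pos (-M / c)).le hc.le)
      calc 4 * Real.exp (-(c₂ * M)) / c₂
          = 4 * (Real.exp (-(c₂ * M)) * (1 / c₂)) := by ring
        _ ≤ 4 * (Real.exp (-M / c) * c) := by linarith [h3]
        _ = 4 * (Real.exp (-M / c) * c * 1) := by ring
        _ ≤ 4 * (Real.exp (-M / c) * c * (M + 1)) := by linarith [h5]
        _ = 4 * (c * Real.exp (-M / c) * (M + 1)) := by ring
    linarith
  · have h1 := core (c₂ := c₂) (M := M) hM (L := 4 / c₂ ^ 2)
      (T := 4 * Real.exp (-(c₂ * M)) * (M / c₂ + 1 / c₂ ^ 2)) (by positivity) (by positivity)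
      (volume.withDensity fun y => ENNReal.ofReal |y|)
      (le_of_eq (lint_den_L hc₂)) (le_of_eq (lint_den_T hc₂ hM))
      integrand hcont hnonneg hle
    refine le_trans h1 ?_
    rw [hE]
    have e1 : Real.exp (-(M^2/2)) * (4 / c₂ ^ 2) ≤ 4 * (c * Real.exp (-(M^2/2))) := by
      have h0 := mul_le_mul_of_nonneg_left hinvc₂sq (Real.exp_pos (-(M^2/2))).le
      calc Real.exp (-(M^2/2)) * (4 / c₂ ^ 2)
          = 4 * (Real.exp (-(M^2/2)) * (1 / c₂ ^ 2)) := by ring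
        _ ≤ 4 * (Real.exp (-(M^2/2)) * c) := by linarith [h0]
        _ = 4 * (c * Real.exp (-(M^2/2))) := by ring
    have e2 : 4 * Real.exp (-(c₂ * M)) * (M / c₂ + 1 / c₂ ^ 2)
        ≤ 4 * (c * Real.exp (-M / c) * (M + 1)) := by
      have hsum : M / c₂ + 1 / c₂ ^ 2 ≤ c * (M + 1) := by
        have hMc : M / c₂ ≤ c * M := by
          rw [div_le_iff₀ hc₂]
          have := mul_le_mul_of_nonneg_left hcc₂ (show (0:ℝ) ≤ M by linarith)
          linarith
        linarith [hinvc₂sq]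
      have htot := mul_le_mul hexp_rate hsum
        (by positivity) (Real.exp_pos _).le
      calc 4 * Real.exp (-(c₂ * M)) * (M / c₂ + 1 / c₂ ^ 2)
          = 4 * (Real.exp (-(c₂ * M)) * (M / c₂ + 1 / c₂ ^ 2)) := by ring
        _ ≤ 4 * (Real.exp (-M / c) * (c * (M + 1))) := by linarith [htot]
        _ = 4 * (c * Real.exp (-M / c) * (M + 1)) := by ring
    linarith
end
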